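/- Assume A = ln(S/K) + rT < 0 and set l = √(−2A). Then V₀ = S e^{rT} ( 1/2 + (1/√(2π)) ( ∫₀^∞ Q(σ̄₀ > σ₂(s)) e^{-s²/2} ds − ∫_{-∞}^0 Q(σ̄₀ < σ₂(s)) e^{-s²/2} ds ) ) − K ( Φ(−l) − (1/√(2π)) ∫_{-∞}^{-l} ( Q(σ̄₀ < σ₃(s)) + Q(σ̄₀ > σ₄(s)) ) e^{-s²/2} ds ). -/

import Mathlib

open MeasureTheory Real Set

/-- The standard normal cumulative distribution function. -/
noncomputable def stdNormalCDF (x : ℝ) : ℝ :=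
  (Real.sqrt (2 * Real.pi))⁻¹ * ∫ u in Set.Iio x, Real.exp (-u ^ 2 / 2)

lemma gauss_fun_eq : (fun x : ℝ => Real.exp (-(1/2) * x ^ 2)) = fun x : ℝ => Real.exp (-x ^ 2 / 2) := by
  funext x; ring_nf

lemma gauss_integrable : Integrable (fun s : ℝ => Real.exp (-s ^ 2 / 2)) := by
  rw [← gauss_fun_eq]; exact integrable_exp_neg_mul_sq (by norm_num)

lemma gauss_total : (∫ s : ℝ, Real.exp (-s ^ 2 / 2)) = Real.sqrt (2 * Real.pi) := by
  rw [← gauss_fun_eq]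
  rw [integral_gaussian (1/2)]
  norm_num [mul_comm]

lemma gauss_Ioi : (∫ s in Ioi (0:ℝ), Real.exp (-s ^ 2 / 2)) = Real.sqrt (2 * Real.pi) / 2 := by
  have h := integral_gaussian_Ioi (1/2)
  rw [show (fun x : ℝ => Real.exp (-(1/2) * x ^ 2)) = fun x : ℝ => Real.exp (-x ^ 2 / 2) from gauss_fun_eq] at h
  rw [h]
  norm_num [mul_comm]

lemma gauss_Iio : (∫ s in Iio (0:ℝ), Real.exp (-s ^ 2 / 2)) = Real.sqrt (2 * Real.pi) / 2 := by
  have h1 := gauss_Ioi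
  have h2 : (∫ s in Iic (0:ℝ), Real.exp (-s ^ 2 / 2)) + ∫ s in Ioi (0:ℝ), Real.exp (-s ^ 2 / 2)
      = ∫ s : ℝ, Real.exp (-s ^ 2 / 2) := by
    have := integral_add_compl (measurableSet_Iic (a := (0:ℝ))) gauss_integrable
    rwa [compl_Iic] at this
  rw [integral_Iic_eq_integral_Iio] at h2
  rw [gauss_total] at h2
  linarith

lemma cdf_zero : stdNormalCDF 0 = 1/2 := by
  rw [stdNormalCDF, gauss_Iio]
  have h : Real.sqrt (2 * Real.pi) ≠ 0 := by positivity
  field_simp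

lemma cdf_diff {a b : ℝ} (hab : a ≤ b) :
    stdNormalCDF b - stdNormalCDF a
      = (Real.sqrt (2 * Real.pi))⁻¹ * ∫ s in Ioo a b, Real.exp (-s ^ 2 / 2) := by
  rw [stdNormalCDF, stdNormalCDF, ← mul_sub]
  congr 1
  have hsplit : Iio a ∪ Ico a b = Iio b := Iio_union_Ico_eq_Iio hab
  have hdisj : Disjoint (Iio a) (Ico a b) := by
    rw [Set.disjoint_left]; intro x hx h2; exact absurd h2.1 (not_le.2 hx)
  rw [← hsplit, setIntegral_union hdisj measurableSet_Ico
    gauss_integrable.integrableOn gauss_integrable.integrableOn,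
    integral_Ico_eq_integral_Ioo]
  ring

lemma cdf_split (x : ℝ) :
    stdNormalCDF x = 1/2 + (Real.sqrt (2 * Real.pi))⁻¹
      * ((∫ s in Ioi (0:ℝ), (Iio x).indicator (fun s => Real.exp (-s ^ 2 / 2)) s)
        - ∫ s in Iio (0:ℝ), (Ioi x).indicator (fun s => Real.exp (-s ^ 2 / 2)) s) := by
  have hplus : (∫ s in Ioi (0:ℝ), (Iio x).indicator (fun s => Real.exp (-s ^ 2 / 2)) s)
      = ∫ s in Iio x ∩ Ioi 0, Real.exp (-s ^ 2 / 2) := by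
    rw [integral_indicator measurableSet_Iio, Measure.restrict_restrict measurableSet_Iio]
  have hminus : (∫ s in Iio (0:ℝ), (Ioi x).indicator (fun s => Real.exp (-s ^ 2 / 2)) s)
      = ∫ s in Ioi x ∩ Iio 0, Real.exp (-s ^ 2 / 2) := by
    rw [integral_indicator measurableSet_Ioi, Measure.restrict_restrict measurableSet_Ioi]
  rcases le_or_gt 0 x with hx | hx
  · have h1 : Iio x ∩ Ioi 0 = Ioo 0 x := by rw [inter_comm, Ioi_inter_Iio]
    have h2 : Ioi x ∩ Iio 0 = (∅ : Set ℝ) := by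
      rw [Ioi_inter_Iio]; exact Ioo_eq_empty (by intro h; linarith)
    rw [hplus, hminus, h1, h2]
    have := cdf_diff hx
    rw [cdf_zero] at this
    simp only [Measure.restrict_empty, integral_zero_measure, sub_zero]
    linarith
  · have h1 : Iio x ∩ Ioi 0 = (∅ : Set ℝ) := by
      rw [inter_comm, Ioi_inter_Iio]; exact Ioo_eq_empty (by intro h; linarith)
    have h2 : Ioi x ∩ Iio 0 = Ioo x 0 := Ioi_inter_Iio
    rw [hplus, hminus, h1, h2]
    have := cdf_diff hx.le
    rw [cdf_zero] at this
    simp only [Measure.restrict_empty, integral_zero_measure, zero_sub, mul_neg]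
    linarith

section Fubini
variable {Ω : Type*} [MeasurableSpace Ω]

lemma prod_int (Q : Measure Ω) [IsProbabilityMeasure Q] {P : Set (Ω × ℝ)}
    (hP : MeasurableSet P) (Sset : Set ℝ) :
    Integrable (P.indicator (fun p : Ω × ℝ => Real.exp (-p.2 ^ 2 / 2)))
      (Q.prod (volume.restrict Sset)) := by
  have hb : Integrable (fun p : Ω × ℝ => (1:ℝ) * Real.exp (-p.2 ^ 2 / 2))
      (Q.prod (volume.restrict Sset)) :=
    (integrable_const 1).mul_prod gauss_integrable.restrict
  simp only [one_mul] at hb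
  refine hb.mono' ?_ ?_
  · exact (Measurable.indicator (by fun_prop) hP).aestronglyMeasurable
  · refine Filter.Eventually.of_forall fun p => ?_
    classical
    rw [Set.indicator_apply]
    by_cases h : p ∈ P <;> simp [h] <;> positivity

lemma marg_int (Q : Measure Ω) [IsProbabilityMeasure Q] {P : Set (Ω × ℝ)}
    (hP : MeasurableSet P) (Sset : Set ℝ) :
    Integrable (fun ω =>
      ∫ s in Sset, P.indicator (fun p : Ω × ℝ => Real.exp (-p.2 ^ 2 / 2)) (ω, s)) Q :=
  (prod_int Q hP Sset).integral_prod_left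

lemma fubini_ind (Q : Measure Ω) [IsProbabilityMeasure Q] {P : Set (Ω × ℝ)}
    (hP : MeasurableSet P) (Sset : Set ℝ) :
    (∫ ω, (∫ s in Sset, P.indicator (fun p : Ω × ℝ => Real.exp (-p.2 ^ 2 / 2)) (ω, s)) ∂Q)
      = ∫ s in Sset, (Q {ω | (ω, s) ∈ P}).toReal * Real.exp (-s ^ 2 / 2) := by
  have hswap := integral_integral_swap
    (f := fun (ω : Ω) (s : ℝ) => P.indicator (fun p : Ω × ℝ => Real.exp (-p.2 ^ 2 / 2)) (ω, s))
    (prod_int Q hP Sset)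
  rw [hswap]
  refine integral_congr_ae (Filter.Eventually.of_forall fun s => ?_)
  have hms : MeasurableSet {ω | (ω, s) ∈ P} := measurable_prodMk_right hP
  have heq : (fun ω => P.indicator (fun p : Ω × ℝ => Real.exp (-p.2 ^ 2 / 2)) (ω, s))
      = Set.indicator {ω | (ω, s) ∈ P} (fun _ => Real.exp (-s ^ 2 / 2)) := by
    funext ω
    classical
    rw [Set.indicator_apply, Set.indicator_apply]
    rfl
  show (∫ ω, P.indicator (fun p : Ω × ℝ => Real.exp (-p.2 ^ 2 / 2)) (ω, s) ∂Q) = _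
  rw [heq, integral_indicator_const _ hms, smul_eq_mul]; rfl

end Fubini

section Quad

lemma quad_iff_gt {T A : ℝ} (hT : 0 < T) (hA : A < 0) {x : ℝ} (hx : 0 < x) (s : ℝ) :
    s < (A + x ^ 2 * T / 2) / (x * Real.sqrt T)
      ↔ s / Real.sqrt T + Real.sqrt (s ^ 2 * T - 2 * T * A) / T < x := by
  have hT' : 0 < Real.sqrt T := Real.sqrt_pos.2 hT
  have hsT : Real.sqrt T * Real.sqrt T = T := Real.mul_self_sqrt hT.le
  have hD0 : 0 ≤ s ^ 2 * T - 2 * T * A := by nlinarith [sq_nonneg s]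
  set q := Real.sqrt (s ^ 2 * T - 2 * T * A) with hq
  have hq0 : 0 ≤ q := Real.sqrt_nonneg _
  have hq2 : q * q = s ^ 2 * T - 2 * T * A := Real.mul_self_sqrt hD0
  have hform : s / Real.sqrt T + q / T = (s * Real.sqrt T + q) / T := by
    rw [div_add_div _ _ hT'.ne' hT.ne', div_eq_div_iff (by positivity) hT.ne']
    linear_combination (-1 : ℝ) * s * T * hsT
  rw [hform, div_lt_iff₀ hT, lt_div_iff₀ (by positivity)]
  constructor
  · intro h
    have h1 : q * q < (x * T - s * Real.sqrt T) ^ 2 := by nlinarith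
    have h2 : 0 < x * T - s * Real.sqrt T := by
      by_contra hcon
      push_neg at hcon
      nlinarith
    nlinarith
  · intro h
    nlinarith [sq_nonneg (x * T - s * Real.sqrt T - q)]

lemma quad_iff_lt {T A : ℝ} (hT : 0 < T) (hA : A < 0) {x : ℝ} (hx : 0 < x) (s : ℝ) :
    (A + x ^ 2 * T / 2) / (x * Real.sqrt T) < s
      ↔ x < s / Real.sqrt T + Real.sqrt (s ^ 2 * T - 2 * T * A) / T := by
  have hT' : 0 < Real.sqrt T := Real.sqrt_pos.2 hT
  have hsT : Real.sqrt T * Real.sqrt T = T := Real.mul_self_sqrt hT.le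
  have hD0 : 0 ≤ s ^ 2 * T - 2 * T * A := by nlinarith [sq_nonneg s]
  set q := Real.sqrt (s ^ 2 * T - 2 * T * A) with hq
  have hq0 : 0 ≤ q := Real.sqrt_nonneg _
  have hq2 : q * q = s ^ 2 * T - 2 * T * A := Real.mul_self_sqrt hD0
  have hform : s / Real.sqrt T + q / T = (s * Real.sqrt T + q) / T := by
    rw [div_add_div _ _ hT'.ne' hT.ne', div_eq_div_iff (by positivity) hT.ne']
    linear_combination (-1 : ℝ) * s * T * hsT
  have h3 : s * Real.sqrt T < q := by
    nlinarith [sq_nonneg (s * Real.sqrt T)]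
  rw [hform, lt_div_iff₀ hT, div_lt_iff₀ (by positivity)]
  constructor
  · intro h
    have h1 : (x * T - s * Real.sqrt T) ^ 2 < q * q := by nlinarith
    nlinarith [sq_nonneg (x * T - s * Real.sqrt T + q)]
  · intro h
    have h4 : -(x * T - s * Real.sqrt T) < q := by nlinarith
    nlinarith

lemma quad2_le {T A l : ℝ} (hT : 0 < T) (hA : A < 0) (hl : l = Real.sqrt (-(2 * A)))
    {x : ℝ} (hx : 0 < x) :
    (A - x ^ 2 * T / 2) / (x * Real.sqrt T) ≤ -l := by
  have hT' : 0 < Real.sqrt T := Real.sqrt_pos.2 hT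
  have hsT : Real.sqrt T * Real.sqrt T = T := Real.mul_self_sqrt hT.le
  have hl2 : l * l = -(2 * A) := hl ▸ Real.mul_self_sqrt (by linarith)
  rw [div_le_iff₀ (by positivity)]
  nlinarith [sq_nonneg (x * Real.sqrt T - l)]

lemma quad2_iff {T A l : ℝ} (hT : 0 < T) (hA : A < 0) (hl : l = Real.sqrt (-(2 * A)))
    {x : ℝ} (hx : 0 < x) {s : ℝ} (hs : s < -l) :
    (A - x ^ 2 * T / 2) / (x * Real.sqrt T) < s
      ↔ (x < -s / Real.sqrt T - Real.sqrt (s ^ 2 * T + 2 * T * A) / T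
          ∨ -s / Real.sqrt T + Real.sqrt (s ^ 2 * T + 2 * T * A) / T < x) := by
  have hT' : 0 < Real.sqrt T := Real.sqrt_pos.2 hT
  have hsT : Real.sqrt T * Real.sqrt T = T := Real.mul_self_sqrt hT.le
  have hl0 : 0 ≤ l := hl ▸ Real.sqrt_nonneg _
  have hl2 : l * l = -(2 * A) := hl ▸ Real.mul_self_sqrt (by linarith)
  have hD0 : 0 ≤ s ^ 2 * T + 2 * T * A := by
    have h' : (0:ℝ) < (-s - l) * (-s + l) := mul_pos (by linarith) (by linarith)
    nlinarith
  set q := Real.sqrt (s ^ 2 * T + 2 * T * A) with hqdef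
  have hq0 : 0 ≤ q := Real.sqrt_nonneg _
  have hq2 : q * q = s ^ 2 * T + 2 * T * A := Real.mul_self_sqrt hD0
  have hform1 : -s / Real.sqrt T - q / T = (-s * Real.sqrt T - q) / T := by
    rw [div_sub_div _ _ hT'.ne' hT.ne', div_eq_div_iff (by positivity) hT.ne']
    linear_combination s * T * hsT
  have hform2 : -s / Real.sqrt T + q / T = (-s * Real.sqrt T + q) / T := by
    rw [div_add_div _ _ hT'.ne' hT.ne', div_eq_div_iff (by positivity) hT.ne']
    linear_combination s * T * hsT
  rw [hform1, hform2, div_lt_iff₀ (by positivity), lt_div_iff₀ hT, div_lt_iff₀ hT]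
  constructor
  · intro h
    have h1 : q * q < (x * T + s * Real.sqrt T) ^ 2 := by nlinarith
    rcases le_or_gt 0 (x * T + s * Real.sqrt T) with h2 | h2
    · right; nlinarith
    · left; nlinarith
  · rintro (h | h)
    · have h1 : q * q < (x * T + s * Real.sqrt T) ^ 2 := by nlinarith
      nlinarith
    · have h1 : q * q < (x * T + s * Real.sqrt T) ^ 2 := by nlinarith
      nlinarith

end Quad

/-- If `A = ln(S/K) + rT < 0` and `l = √(−2A)`, then the option price
`V₀ = S e^{rT} E[Φ(d₁)] − K E[Φ(d₂)]` satisfies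
`V₀ = S e^{rT} (1/2 + (1/√(2π)) (∫₀^∞ Q(σ̄₀ > σ₂(s)) e^{-s²/2} ds
        − ∫_{-∞}^0 Q(σ̄₀ < σ₂(s)) e^{-s²/2} ds))
  − K (Φ(−l) − (1/√(2π)) ∫_{-∞}^{-l} (Q(σ̄₀ < σ₃(s)) + Q(σ̄₀ > σ₄(s))) e^{-s²/2} ds)`. -/
theorem optionPrice_repr_neg
    {Ω : Type*} [MeasurableSpace Ω] (Q : Measure Ω) [IsProbabilityMeasure Q]
    (c : ℝ) (hc : 0 < c) (σ₀ : Ω → ℝ) (hσ₀ : Measurable σ₀)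
    (hσ₀c : ∀ᵐ ω ∂Q, c ≤ σ₀ ω)
    (S K T r : ℝ) (hS : 0 < S) (hK : 0 < K) (hT : 0 < T)
    (A : ℝ) (hA : A = Real.log (S / K) + r * T) (hAneg : A < 0)
    (l : ℝ) (hl : l = Real.sqrt (-(2 * A)))
    (d₁ d₂ : Ω → ℝ)
    (hd₁ : d₁ = fun ω =>
      (Real.log (S / K) + (r + σ₀ ω ^ 2 / 2) * T) / (σ₀ ω * Real.sqrt T))
    (hd₂ : d₂ = fun ω => d₁ ω - σ₀ ω * Real.sqrt T)
    (σ₁ σ₂ σ₃ σ₄ : ℝ → ℝ)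
    (hσ₁ : ∀ s, σ₁ s = s / Real.sqrt T - Real.sqrt (s ^ 2 * T - 2 * T * A) / T)
    (hσ₂ : ∀ s, σ₂ s = s / Real.sqrt T + Real.sqrt (s ^ 2 * T - 2 * T * A) / T)
    (hσ₃ : ∀ s, σ₃ s = -s / Real.sqrt T - Real.sqrt (s ^ 2 * T + 2 * T * A) / T)
    (hσ₄ : ∀ s, σ₄ s = -s / Real.sqrt T + Real.sqrt (s ^ 2 * T + 2 * T * A) / T)
    (V₀ : ℝ)
    (hV₀ : V₀ = S * Real.exp (r * T) * ∫ ω, stdNormalCDF (d₁ ω) ∂Q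
      - K * ∫ ω, stdNormalCDF (d₂ ω) ∂Q) :
    V₀ = S * Real.exp (r * T)
          * (1 / 2
            + (Real.sqrt (2 * Real.pi))⁻¹
                * ((∫ s in Set.Ioi (0 : ℝ),
                      (Q {ω | σ₀ ω > σ₂ s}).toReal * Real.exp (-s ^ 2 / 2))
                  - ∫ s in Set.Iio (0 : ℝ),
                      (Q {ω | σ₀ ω < σ₂ s}).toReal * Real.exp (-s ^ 2 / 2)))
        - K * (stdNormalCDF (-l)
            - (Real.sqrt (2 * Real.pi))⁻¹
                * ∫ s in Set.Iio (-l),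
                    ((Q {ω | σ₀ ω < σ₃ s}).toReal + (Q {ω | σ₀ ω > σ₄ s}).toReal)
                      * Real.exp (-s ^ 2 / 2)) := by
  have hT' : 0 < Real.sqrt T := Real.sqrt_pos.2 hT
  have hsT : Real.sqrt T * Real.sqrt T = T := Real.mul_self_sqrt hT.le
  have hσ₂m : Measurable σ₂ := by
    have h : σ₂ = fun s => s / Real.sqrt T + Real.sqrt (s ^ 2 * T - 2 * T * A) / T :=
      funext hσ₂
    rw [h]; fun_prop
  have hσ₃m : Measurable σ₃ := by
    have h : σ₃ = fun s => -s / Real.sqrt T - Real.sqrt (s ^ 2 * T + 2 * T * A) / T :=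
      funext hσ₃
    rw [h]; fun_prop
  have hσ₄m : Measurable σ₄ := by
    have h : σ₄ = fun s => -s / Real.sqrt T + Real.sqrt (s ^ 2 * T + 2 * T * A) / T :=
      funext hσ₄
    rw [h]; fun_prop
  set P₁ : Set (Ω × ℝ) := {p | σ₂ p.2 < σ₀ p.1} with hP₁def
  have hP₁ : MeasurableSet P₁ :=
    measurableSet_lt (hσ₂m.comp measurable_snd) (hσ₀.comp measurable_fst)
  set P₂ : Set (Ω × ℝ) := {p | σ₀ p.1 < σ₂ p.2} with hP₂def
  have hP₂ : MeasurableSet P₂ :=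
    measurableSet_lt (hσ₀.comp measurable_fst) (hσ₂m.comp measurable_snd)
  set P₃ : Set (Ω × ℝ) := {p | σ₀ p.1 < σ₃ p.2} ∪ {p | σ₄ p.2 < σ₀ p.1} with hP₃def
  have hP₃ : MeasurableSet P₃ :=
    (measurableSet_lt (hσ₀.comp measurable_fst) (hσ₃m.comp measurable_snd)).union
      (measurableSet_lt (hσ₄m.comp measurable_snd) (hσ₀.comp measurable_fst))
  have hd₁form : ∀ ω, d₁ ω = (A + σ₀ ω ^ 2 * T / 2) / (σ₀ ω * Real.sqrt T) := by
    intro ω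
    rw [hd₁]
    simp only
    congr 1
    rw [hA]; ring
  have hd₂form : ∀ ω, c ≤ σ₀ ω → d₂ ω = (A - σ₀ ω ^ 2 * T / 2) / (σ₀ ω * Real.sqrt T) := by
    intro ω h
    have hx : 0 < σ₀ ω := lt_of_lt_of_le hc h
    rw [hd₂]
    simp only
    rw [hd₁form ω, eq_div_iff (by positivity : σ₀ ω * Real.sqrt T ≠ 0), sub_mul,
      div_mul_cancel₀ _ (by positivity : σ₀ ω * Real.sqrt T ≠ 0)]
    linear_combination (-(σ₀ ω ^ 2)) * hsT
  -- Part 1 : the d₁ expectation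
  have E1 : (∫ ω, stdNormalCDF (d₁ ω) ∂Q)
      = 1/2 + (Real.sqrt (2 * Real.pi))⁻¹
          * ((∫ s in Ioi (0:ℝ), (Q {ω | σ₀ ω > σ₂ s}).toReal * Real.exp (-s ^ 2 / 2))
            - ∫ s in Iio (0:ℝ), (Q {ω | σ₀ ω < σ₂ s}).toReal * Real.exp (-s ^ 2 / 2)) := by
    have hcong : ∀ᵐ ω ∂Q, stdNormalCDF (d₁ ω)
        = 1/2 + (Real.sqrt (2 * Real.pi))⁻¹
            * ((∫ s in Ioi (0:ℝ), P₁.indicator (fun p : Ω × ℝ => Real.exp (-p.2 ^ 2 / 2)) (ω, s))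
              - ∫ s in Iio (0:ℝ), P₂.indicator (fun p : Ω × ℝ => Real.exp (-p.2 ^ 2 / 2)) (ω, s)) := by
      filter_upwards [hσ₀c] with ω h
      have hx : 0 < σ₀ ω := lt_of_lt_of_le hc h
      rw [cdf_split (d₁ ω)]
      have e₁ : (fun s : ℝ => (Iio (d₁ ω)).indicator (fun s => Real.exp (-s ^ 2 / 2)) s)
          = fun s : ℝ => P₁.indicator (fun p : Ω × ℝ => Real.exp (-p.2 ^ 2 / 2)) (ω, s) := by
        funext s
        classical
        rw [Set.indicator_apply, Set.indicator_apply]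
        refine if_congr ?_ rfl rfl
        show s < d₁ ω ↔ σ₂ s < σ₀ ω
        rw [hd₁form ω, hσ₂ s]
        exact quad_iff_gt hT hAneg hx s
      have e₂ : (fun s : ℝ => (Ioi (d₁ ω)).indicator (fun s => Real.exp (-s ^ 2 / 2)) s)
          = fun s : ℝ => P₂.indicator (fun p : Ω × ℝ => Real.exp (-p.2 ^ 2 / 2)) (ω, s) := by
        funext s
        classical
        rw [Set.indicator_apply, Set.indicator_apply]
        refine if_congr ?_ rfl rfl
        show d₁ ω < s ↔ σ₀ ω < σ₂ s
        rw [hd₁form ω, hσ₂ s]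
        exact quad_iff_lt hT hAneg hx s
      rw [e₁, e₂]
    rw [integral_congr_ae hcong]
    have h2 : Integrable (fun ω =>
        (Real.sqrt (2 * Real.pi))⁻¹
          * ((∫ s in Ioi (0:ℝ), P₁.indicator (fun p : Ω × ℝ => Real.exp (-p.2 ^ 2 / 2)) (ω, s))
            - ∫ s in Iio (0:ℝ), P₂.indicator (fun p : Ω × ℝ => Real.exp (-p.2 ^ 2 / 2)) (ω, s))) Q :=
      ((marg_int Q hP₁ (Ioi 0)).sub (marg_int Q hP₂ (Iio 0))).const_mul _
    rw [integral_add (integrable_const _) h2]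
    rw [integral_const]
    rw [integral_const_mul]
    rw [integral_sub (marg_int Q hP₁ (Ioi 0)) (marg_int Q hP₂ (Iio 0))]
    rw [fubini_ind Q hP₁ (Ioi 0), fubini_ind Q hP₂ (Iio 0)]
    simp only [measure_univ, probReal_univ, ENNReal.toReal_one, smul_eq_mul, mul_one, one_smul, one_mul]
    rfl
  -- Part 2 : the d₂ expectation
  have E2 : (∫ ω, stdNormalCDF (d₂ ω) ∂Q)
      = stdNormalCDF (-l) - (Real.sqrt (2 * Real.pi))⁻¹
          * ∫ s in Iio (-l),
              ((Q {ω | σ₀ ω < σ₃ s}).toReal + (Q {ω | σ₀ ω > σ₄ s}).toReal)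
                * Real.exp (-s ^ 2 / 2) := by
    have hcong : ∀ᵐ ω ∂Q, stdNormalCDF (d₂ ω)
        = stdNormalCDF (-l) - (Real.sqrt (2 * Real.pi))⁻¹
            * ∫ s in Iio (-l), P₃.indicator (fun p : Ω × ℝ => Real.exp (-p.2 ^ 2 / 2)) (ω, s) := by
      filter_upwards [hσ₀c] with ω h
      have hx : 0 < σ₀ ω := lt_of_lt_of_le hc h
      have hle : d₂ ω ≤ -l := by
        rw [hd₂form ω h]; exact quad2_le hT hAneg hl hx
      have hdiff := cdf_diff hle
      have hint : (∫ s in Iio (-l), P₃.indicator (fun p : Ω × ℝ => Real.exp (-p.2 ^ 2 / 2)) (ω, s))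
          = ∫ s in Ioo (d₂ ω) (-l), Real.exp (-s ^ 2 / 2) := by
        have hcg : ∀ s ∈ Iio (-l),
            P₃.indicator (fun p : Ω × ℝ => Real.exp (-p.2 ^ 2 / 2)) (ω, s)
              = (Ioi (d₂ ω)).indicator (fun s => Real.exp (-s ^ 2 / 2)) s := by
          intro s hs
          classical
          rw [Set.indicator_apply, Set.indicator_apply]
          refine if_congr ?_ rfl rfl
          show (σ₀ ω < σ₃ s ∨ σ₄ s < σ₀ ω) ↔ d₂ ω < s
          rw [hd₂form ω h, hσ₃ s, hσ₄ s]
          exact (quad2_iff hT hAneg hl hx (mem_Iio.mp hs)).symm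
        rw [setIntegral_congr_fun measurableSet_Iio hcg]
        rw [integral_indicator measurableSet_Ioi, Measure.restrict_restrict measurableSet_Ioi,
          Ioi_inter_Iio]
      rw [hint]
      linarith
    rw [integral_congr_ae hcong]
    rw [integral_sub (integrable_const _) ((marg_int Q hP₃ (Iio (-l))).const_mul _)]
    rw [integral_const]
    rw [integral_const_mul]
    rw [fubini_ind Q hP₃ (Iio (-l))]
    have hfin : (∫ s in Iio (-l), (Q {ω | (ω, s) ∈ P₃}).toReal * Real.exp (-s ^ 2 / 2))
        = ∫ s in Iio (-l),
            ((Q {ω | σ₀ ω < σ₃ s}).toReal + (Q {ω | σ₀ ω > σ₄ s}).toReal)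
              * Real.exp (-s ^ 2 / 2) := by
      refine setIntegral_congr_fun measurableSet_Iio fun s hs => ?_
      have hs' : s < -l := mem_Iio.mp hs
      have hl0 : 0 ≤ l := hl ▸ Real.sqrt_nonneg _
      have hσ₃₄ : σ₃ s ≤ σ₄ s := by
        rw [hσ₃ s, hσ₄ s]
        have h0 : 0 ≤ Real.sqrt (s ^ 2 * T + 2 * T * A) / T :=
          div_nonneg (Real.sqrt_nonneg _) hT.le
        linarith
      have hdisj : Disjoint {ω | σ₀ ω < σ₃ s} {ω | σ₄ s < σ₀ ω} := by
        rw [Set.disjoint_left]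
        intro ω h1 h2
        simp only [mem_setOf_eq] at h1 h2
        linarith
      have hset : {ω | (ω, s) ∈ P₃} = {ω | σ₀ ω < σ₃ s} ∪ {ω | σ₄ s < σ₀ ω} := rfl
      have hmeas : Q {ω | (ω, s) ∈ P₃}
          = Q {ω | σ₀ ω < σ₃ s} + Q {ω | σ₄ s < σ₀ ω} := by
        rw [hset, measure_union hdisj (measurableSet_lt measurable_const hσ₀)]
      rw [hmeas, ENNReal.toReal_add (measure_ne_top _ _) (measure_ne_top _ _)]
    rw [hfin]
    simp [measure_univ]
  rw [hV₀, E1, E2]
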